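/- Let g : ℝᵈ → ℝ be K-Lipschitz, Z ∼ ρ, X₁ ∼ ρ*_σ, Y ∼ ρ* any coupling, p = P(g(Z) ≤ 0) > 0, p_σ = E[F_σ(Z)]. If E[g(X₁)²] < ∞, then for N i.i.d. samples Xᵢ ∼ ρ*_σ, (1/p)·E[|(1/N)Σᵢ 1_{g(Xᵢ)≤0} ρ(Xᵢ)/ρ*_σ(Xᵢ) − p|²]^{1/2} ≤ (6/(√N p))·(e^{-μ/σ} + P(0 < g(Z) < 2μ) + (e^{-2μ/σ}/σ²)·E[|g(X₁) − g(Y)|² 1_{g(X₁)≤0}])^{1/2}. -/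

import Mathlib

open MeasureTheory ProbabilityTheory

noncomputable def gaussD (d : ℕ) (x : EuclideanSpace ℝ (Fin d)) : ℝ :=
  (2 * Real.pi) ^ (-(d : ℝ) / 2) * Real.exp (-‖x‖ ^ 2 / 2)

noncomputable def Fsig {E : Type*} (g : E → ℝ) (σ μ : ℝ) (x : E) : ℝ :=
  (1 + Real.exp ((-μ + g x) / σ))⁻¹

lemma gaussD_pos (d : ℕ) (x : EuclideanSpace ℝ (Fin d)) : 0 < gaussD d x := by
  unfold gaussD; positivity

lemma gaussD_meas (d : ℕ) : Measurable (gaussD d) := by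
  unfold gaussD; fun_prop

lemma Fsig_pos {E : Type*} (g : E → ℝ) (σ μ : ℝ) (x : E) : 0 < Fsig g σ μ x := by
  unfold Fsig; positivity

lemma Fsig_le_one {E : Type*} (g : E → ℝ) (σ μ : ℝ) (x : E) : Fsig g σ μ x ≤ 1 := by
  unfold Fsig
  rw [inv_le_one_iff₀]
  right
  nlinarith [Real.exp_pos ((-μ + g x) / σ)]

lemma lintegral_eq_of_prob {α : Type*} [MeasurableSpace α] {μ : Measure α} {w : α → ENNReal}
    (h : IsProbabilityMeasure (μ.withDensity w)) : ∫⁻ x, w x ∂μ = 1 := by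
  have := h.measure_univ
  rwa [withDensity_apply _ MeasurableSet.univ, setLIntegral_univ] at this

noncomputable def phiAux (d : ℕ) (g : EuclideanSpace ℝ (Fin d) → ℝ) (σ μ pσ : ℝ)
    (x : EuclideanSpace ℝ (Fin d)) : ℝ :=
  if g x ≤ 0 then gaussD d x / (Fsig g σ μ x * gaussD d x / pσ) else 0

lemma key_int {α Ω : Type*} [MeasurableSpace α] [MeasurableSpace Ω] {P : Measure Ω}
    {X : Ω → α} (hX : Measurable X) {μ : Measure α} {dens : α → ℝ}
    (hdens : Measurable dens) (hdnn : ∀ x, 0 ≤ dens x)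
    (hlaw : Measure.map X P = μ.withDensity (fun x => ENNReal.ofReal (dens x)))
    (h : α → ℝ) (hh : Measurable h) (hhnn : ∀ x, 0 ≤ h x) :
    ∫ ω, h (X ω) ∂P = (∫⁻ x, ENNReal.ofReal (h x * dens x) ∂μ).toReal := by
  calc ∫ ω, h (X ω) ∂P = ∫ y, h y ∂(Measure.map X P) :=
        (integral_map hX.aemeasurable hh.aestronglyMeasurable).symm
    _ = ∫ y, h y ∂(μ.withDensity (fun x => ENNReal.ofReal (dens x))) := by rw [hlaw]
    _ = (∫⁻ y, ENNReal.ofReal (h y)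
          ∂(μ.withDensity (fun x => ENNReal.ofReal (dens x)))).toReal :=
        integral_eq_lintegral_of_nonneg_ae (ae_of_all _ hhnn) hh.aestronglyMeasurable
    _ = (∫⁻ x, ENNReal.ofReal (h x * dens x) ∂μ).toReal := by
        rw [lintegral_withDensity_eq_lintegral_mul μ hdens.ennreal_ofReal hh.ennreal_ofReal]
        congr 1
        apply lintegral_congr
        intro x
        simp only [Pi.mul_apply]
        rw [← ENNReal.ofReal_mul (hdnn x), mul_comm]

lemma Fsig_meas {E : Type*} [MeasurableSpace E] {g : E → ℝ} (hg : Measurable g) (σ μ : ℝ) :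
    Measurable (Fsig g σ μ) := by
  unfold Fsig; fun_prop

set_option maxHeartbeats 2000000 in
theorem stmt19 {d : ℕ} {Ω : Type*} [MeasurableSpace Ω] (P : Measure Ω)
    [IsProbabilityMeasure P]
    (g : EuclideanSpace ℝ (Fin d) → ℝ) (hg : Measurable g)
    (K σ μ : ℝ) (hσ : 0 < σ) (hμ : 0 < μ)
    (hK : ∀ x y, |g x - g y| ≤ K * ‖x - y‖)
    (p pσ : ℝ)
    (hp : p = ∫ x in {y | g y ≤ 0}, gaussD d x) (hppos : 0 < p)
    (hpσ : pσ = ∫ x, Fsig g σ μ x * gaussD d x)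
    {N : ℕ} (hN : 0 < N)
    (X : Fin N → Ω → EuclideanSpace ℝ (Fin d))
    (Y Z : Ω → EuclideanSpace ℝ (Fin d))
    (hXmeas : ∀ i, Measurable (X i)) (hYmeas : Measurable Y) (hZmeas : Measurable Z)
    (hindep : iIndepFun X P)
    (hXlaw : ∀ i, Measure.map (X i) P
      = volume.withDensity (fun x => ENNReal.ofReal (Fsig g σ μ x * gaussD d x / pσ)))
    (hYlaw : Measure.map Y P
      = volume.withDensity
          (fun x => ENNReal.ofReal (Set.indicator {y | g y ≤ 0} (gaussD d) x / p)))
    (hZlaw : Measure.map Z P = volume.withDensity (fun x => ENNReal.ofReal (gaussD d x)))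
    (hL2 : Integrable (fun ω => g (X ⟨0, hN⟩ ω) ^ 2) P) :
    p⁻¹ * Real.sqrt (∫ ω, ((N : ℝ)⁻¹ * ∑ i,
        (if g (X i ω) ≤ 0 then
          gaussD d (X i ω) / (Fsig g σ μ (X i ω) * gaussD d (X i ω) / pσ) else 0)
        - p) ^ 2 ∂P)
      ≤ 6 / (Real.sqrt N * p) * Real.sqrt (Real.exp (-μ / σ)
          + (P {ω | 0 < g (Z ω) ∧ g (Z ω) < 2 * μ}).toReal
          + Real.exp (-2 * μ / σ) / σ ^ 2
            * ∫ ω, (if g (X ⟨0, hN⟩ ω) ≤ 0 then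
                (g (X ⟨0, hN⟩ ω) - g (Y ω)) ^ 2 else 0) ∂P) := by
  classical
  have hA : MeasurableSet {y | g y ≤ 0} := measurableSet_le hg measurable_const
  have hρpos := gaussD_pos d
  have hρmeas := gaussD_meas d
  have hFpos := Fsig_pos g σ μ
  have hFle := Fsig_le_one g σ μ
  have hFmeas := Fsig_meas hg σ μ
  set e := Real.exp (-μ / σ) with hedef
  have hepos : 0 < e := Real.exp_pos _
  have hele : e ≤ 1 := Real.exp_le_one_iff.mpr (by apply div_nonpos_of_nonpos_of_nonneg <;> linarith)
  -- total mass of gaussian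
  have hZprob : IsProbabilityMeasure (P.map Z) := Measure.isProbabilityMeasure_map hZmeas.aemeasurable
  rw [hZlaw] at hZprob
  have htot : ∫⁻ x, ENNReal.ofReal (gaussD d x) = 1 := lintegral_eq_of_prob hZprob
  -- pσ > 0
  have hXprob : IsProbabilityMeasure (P.map (X ⟨0, hN⟩)) :=
    Measure.isProbabilityMeasure_map (hXmeas _).aemeasurable
  rw [hXlaw] at hXprob
  have hXtot : ∫⁻ x, ENNReal.ofReal (Fsig g σ μ x * gaussD d x / pσ) = 1 :=
    lintegral_eq_of_prob hXprob
  have hpσpos : 0 < pσ := by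
    by_contra hcon
    push_neg at hcon
    have hz : ∀ x : EuclideanSpace ℝ (Fin d),
        ENNReal.ofReal (Fsig g σ μ x * gaussD d x / pσ) = 0 := by
      intro x
      rw [ENNReal.ofReal_eq_zero]
      exact div_nonpos_iff.mpr (Or.inl ⟨mul_nonneg (hFpos x).le (hρpos x).le, hcon⟩)
    simp [hz] at hXtot
  -- ∫ F ρ = pσ in ENNReal
  have hFρ : ∫⁻ x, ENNReal.ofReal (Fsig g σ μ x * gaussD d x) = ENNReal.ofReal pσ := by
    have h2 : ∫⁻ x, ENNReal.ofReal (Fsig g σ μ x * gaussD d x) / ENNReal.ofReal pσ = 1 := by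
      rw [← hXtot]
      apply lintegral_congr
      intro x
      rw [ENNReal.ofReal_div_of_pos hpσpos]
    simp only [div_eq_mul_inv] at h2
    rw [lintegral_mul_const' _ _ (by simp [hpσpos]), ← div_eq_mul_inv] at h2
    exact (ENNReal.div_eq_one_iff (ENNReal.ofReal_pos.mpr hpσpos).ne'
      ENNReal.ofReal_ne_top).mp h2
  -- indicator density: ∫⁻_A ρ = p
  have hYprob : IsProbabilityMeasure (P.map Y) := Measure.isProbabilityMeasure_map hYmeas.aemeasurable
  rw [hYlaw] at hYprob
  have hYtot : ∫⁻ x, ENNReal.ofReal (Set.indicator {y | g y ≤ 0} (gaussD d) x / p) = 1 :=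
    lintegral_eq_of_prob hYprob
  have hAρ : ∫⁻ x in {y | g y ≤ 0}, ENNReal.ofReal (gaussD d x) = ENNReal.ofReal p := by
    have h3 : ∫⁻ x, ENNReal.ofReal (Set.indicator {y | g y ≤ 0} (gaussD d) x)
        = ENNReal.ofReal p := by
      have h2 : ∫⁻ x, ENNReal.ofReal (Set.indicator {y | g y ≤ 0} (gaussD d) x)
          * (ENNReal.ofReal p)⁻¹ = 1 := by
        rw [← hYtot]
        apply lintegral_congr
        intro x
        rw [ENNReal.ofReal_div_of_pos hppos, div_eq_mul_inv]
      rw [lintegral_mul_const' _ _ (by simp [hppos]), ← div_eq_mul_inv] at h2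
      exact (ENNReal.div_eq_one_iff (ENNReal.ofReal_pos.mpr hppos).ne'
        ENNReal.ofReal_ne_top).mp h2
    rw [← h3, ← lintegral_indicator hA]
    apply lintegral_congr
    intro x
    by_cases hx : x ∈ {y | g y ≤ 0} <;>
      simp [Set.indicator_of_mem, Set.indicator_of_notMem, hx]
  -- p, pσ ≤ 1
  have hple1 : p ≤ 1 := by
    rw [← ENNReal.ofReal_le_one, ← hAρ, ← htot]
    exact setLIntegral_le_lintegral _ _
  have hpσle1 : pσ ≤ 1 := by
    rw [← ENNReal.ofReal_le_one, ← hFρ, ← htot]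
    apply lintegral_mono
    intro x
    apply ENNReal.ofReal_le_ofReal
    nlinarith [hFle x, hρpos x, hFpos x]
  -- pointwise exponential facts
  have hEA : ∀ x : EuclideanSpace ℝ (Fin d), g x ≤ 0 → Real.exp ((-μ + g x) / σ) ≤ e := by
    intro x hx
    rw [hedef]
    apply Real.exp_le_exp.mpr
    apply (div_le_div_iff_of_pos_right hσ).mpr
    linarith
  have hFinv : ∀ x : EuclideanSpace ℝ (Fin d),
      Fsig g σ μ x = (1 + Real.exp ((-μ + g x) / σ))⁻¹ := fun x => rfl
  have hFtail : ∀ x : EuclideanSpace ℝ (Fin d), 2 * μ ≤ g x → Fsig g σ μ x ≤ e := by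
    intro x hx
    have hE : (0:ℝ) < Real.exp ((-μ + g x) / σ) := Real.exp_pos _
    calc Fsig g σ μ x ≤ (Real.exp ((-μ + g x) / σ))⁻¹ := by
          rw [hFinv]
          exact inv_anti₀ hE (by linarith)
      _ = Real.exp (-((-μ + g x) / σ)) := (Real.exp_neg _).symm
      _ ≤ e := by
          rw [hedef]
          apply Real.exp_le_exp.mpr
          rw [← neg_div]
          apply (div_le_div_iff_of_pos_right hσ).mpr
          linarith
  have hFhalf : ∀ x : EuclideanSpace ℝ (Fin d), g x ≤ 0 → (2:ℝ)⁻¹ ≤ Fsig g σ μ x := by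
    intro x hx
    have hE : (0:ℝ) < Real.exp ((-μ + g x) / σ) := Real.exp_pos _
    rw [hFinv]
    exact inv_anti₀ (by linarith) (by nlinarith [hEA x hx])
  have hFcompl : ∀ x : EuclideanSpace ℝ (Fin d), g x ≤ 0 → 1 - Fsig g σ μ x ≤ e := by
    intro x hx
    have hE : (0:ℝ) < Real.exp ((-μ + g x) / σ) := Real.exp_pos _
    have hinv : (1 + Real.exp ((-μ + g x) / σ)) * (1 + Real.exp ((-μ + g x) / σ))⁻¹ = 1 :=
      mul_inv_cancel₀ (by linarith)
    have hinvnn : (0:ℝ) ≤ (1 + Real.exp ((-μ + g x) / σ))⁻¹ := by positivity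
    rw [hFinv]
    nlinarith [hEA x hx]
  -- the middle probability Q
  have hS2 : MeasurableSet {x : EuclideanSpace ℝ (Fin d) | 0 < g x ∧ g x < 2 * μ} :=
    (measurableSet_lt measurable_const hg).inter (measurableSet_lt hg measurable_const)
  have hQ : P {ω | 0 < g (Z ω) ∧ g (Z ω) < 2 * μ}
      = ∫⁻ x in {x | 0 < g x ∧ g x < 2 * μ}, ENNReal.ofReal (gaussD d x) := by
    have : {ω | 0 < g (Z ω) ∧ g (Z ω) < 2 * μ}
        = Z ⁻¹' {x | 0 < g x ∧ g x < 2 * μ} := rfl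
    rw [this, ← Measure.map_apply hZmeas hS2, hZlaw, withDensity_apply _ hS2]
  set Q := P {ω | 0 < g (Z ω) ∧ g (Z ω) < 2 * μ} with hQdef
  have hQle1 : Q ≤ 1 := prob_le_one
  set q := Q.toReal with hqdef
  have hqnn : 0 ≤ q := ENNReal.toReal_nonneg
  have hqle1 : q ≤ 1 := by
    rw [hqdef]
    exact ENNReal.toReal_le_of_le_ofReal zero_le_one (by simpa using hQle1)
  have hQq : Q = ENNReal.ofReal q := (ENNReal.ofReal_toReal (by
    exact ne_top_of_le_ne_top ENNReal.one_ne_top hQle1)).symm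
  -- tail bound
  have hJ : ∫⁻ x in {y | g y ≤ 0}ᶜ, ENNReal.ofReal (Fsig g σ μ x * gaussD d x)
      ≤ ENNReal.ofReal e + Q := by
    have hsub : {y : EuclideanSpace ℝ (Fin d) | g y ≤ 0}ᶜ
        ⊆ {x | 0 < g x ∧ g x < 2 * μ} ∪ {x | 2 * μ ≤ g x} := by
      intro x hx
      simp only [Set.mem_compl_iff, Set.mem_setOf_eq, not_le] at hx
      by_cases h2 : 2 * μ ≤ g x
      · exact Or.inr h2
      · exact Or.inl ⟨hx, by linarith⟩
    calc ∫⁻ x in {y | g y ≤ 0}ᶜ, ENNReal.ofReal (Fsig g σ μ x * gaussD d x)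
        ≤ ∫⁻ x in {x | 0 < g x ∧ g x < 2 * μ} ∪ {x | 2 * μ ≤ g x},
            ENNReal.ofReal (Fsig g σ μ x * gaussD d x) := lintegral_mono_set hsub
      _ ≤ (∫⁻ x in {x | 0 < g x ∧ g x < 2 * μ}, ENNReal.ofReal (Fsig g σ μ x * gaussD d x))
          + ∫⁻ x in {x | 2 * μ ≤ g x}, ENNReal.ofReal (Fsig g σ μ x * gaussD d x) :=
          lintegral_union_le _ _ _
      _ ≤ Q + ENNReal.ofReal e := by
          apply add_le_add
          · rw [hQ]
            apply setLIntegral_mono hρmeas.ennreal_ofReal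
            intro x _
            apply ENNReal.ofReal_le_ofReal
            nlinarith [hFle x, hρpos x]
          · calc ∫⁻ x in {x | 2 * μ ≤ g x}, ENNReal.ofReal (Fsig g σ μ x * gaussD d x)
                ≤ ∫⁻ x in {x | 2 * μ ≤ g x}, ENNReal.ofReal e * ENNReal.ofReal (gaussD d x) := by
                  apply setLIntegral_mono (by fun_prop)
                  intro x hx
                  rw [← ENNReal.ofReal_mul hepos.le]
                  apply ENNReal.ofReal_le_ofReal
                  nlinarith [hFtail x hx, hρpos x, hFpos x]
              _ ≤ ∫⁻ x, ENNReal.ofReal e * ENNReal.ofReal (gaussD d x) :=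
                  setLIntegral_le_lintegral _ _
              _ = ENNReal.ofReal e := by
                  rw [lintegral_const_mul' _ _ ENNReal.ofReal_ne_top, htot, mul_one]
      _ = ENNReal.ofReal e + Q := add_comm _ _
  -- comparisons between p and pσ
  have hApσ : ∫⁻ x in {y | g y ≤ 0}, ENNReal.ofReal (Fsig g σ μ x * gaussD d x)
      ≤ ENNReal.ofReal p := by
    rw [← hAρ]
    apply setLIntegral_mono hρmeas.ennreal_ofReal
    intro x _
    apply ENNReal.ofReal_le_ofReal
    nlinarith [hFle x, hρpos x, hFpos x]
  have hcmp1 : pσ ≤ p + (e + q) := by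
    rw [← ENNReal.ofReal_le_ofReal_iff (by positivity), ← hFρ,
      ← lintegral_add_compl (μ := volume)
        (fun x => ENNReal.ofReal (Fsig g σ μ x * gaussD d x)) hA,
      ENNReal.ofReal_add hppos.le (by positivity), ENNReal.ofReal_add hepos.le hqnn]
    exact add_le_add hApσ (le_trans hJ (by rw [hQq]))
  have hcmp2 : p ≤ pσ + e := by
    rw [← ENNReal.ofReal_le_ofReal_iff (by positivity), ← hAρ,
      ENNReal.ofReal_add hpσpos.le hepos.le]
    calc ∫⁻ x in {y | g y ≤ 0}, ENNReal.ofReal (gaussD d x)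
        ≤ ∫⁻ x in {y | g y ≤ 0}, (ENNReal.ofReal (Fsig g σ μ x * gaussD d x)
            + ENNReal.ofReal (e * gaussD d x)) := by
          apply setLIntegral_mono (by fun_prop)
          intro x hx
          rw [← ENNReal.ofReal_add (by nlinarith [hFpos x, hρpos x]) (by nlinarith [hρpos x])]
          apply ENNReal.ofReal_le_ofReal
          nlinarith [hFcompl x hx, hρpos x]
      _ = (∫⁻ x in {y | g y ≤ 0}, ENNReal.ofReal (Fsig g σ μ x * gaussD d x))
          + ∫⁻ x in {y | g y ≤ 0}, ENNReal.ofReal (e * gaussD d x) :=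
          lintegral_add_left (by fun_prop) _
      _ ≤ ENNReal.ofReal pσ + ENNReal.ofReal e := by
          apply add_le_add
          · rw [← hFρ]; exact setLIntegral_le_lintegral _ _
          · calc ∫⁻ x in {y | g y ≤ 0}, ENNReal.ofReal (e * gaussD d x)
                ≤ ∫⁻ x, ENNReal.ofReal (e * gaussD d x) := setLIntegral_le_lintegral _ _
              _ = ENNReal.ofReal e := by
                  simp_rw [ENNReal.ofReal_mul hepos.le]
                  rw [lintegral_const_mul' _ _ ENNReal.ofReal_ne_top, htot, mul_one]
  have hhalf : p ≤ 2 * pσ := by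
    rw [← ENNReal.ofReal_le_ofReal_iff (by positivity), ← hAρ]
    calc ∫⁻ x in {y | g y ≤ 0}, ENNReal.ofReal (gaussD d x)
        ≤ ∫⁻ x in {y | g y ≤ 0}, ENNReal.ofReal 2 * ENNReal.ofReal (Fsig g σ μ x * gaussD d x) := by
          apply setLIntegral_mono (by fun_prop)
          intro x hx
          rw [← ENNReal.ofReal_mul (by norm_num)]
          apply ENNReal.ofReal_le_ofReal
          have := hFhalf x hx
          nlinarith [hρpos x]
      _ ≤ ENNReal.ofReal 2 * ∫⁻ x, ENNReal.ofReal (Fsig g σ μ x * gaussD d x) := by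
          rw [lintegral_const_mul' _ _ ENNReal.ofReal_ne_top]
          exact mul_le_mul_right (setLIntegral_le_lintegral _ _) _
      _ = ENNReal.ofReal (2 * pσ) := by
          rw [hFρ, ← ENNReal.ofReal_mul (by norm_num)]
  -- the importance weight function φ
  have hφA : ∀ x : EuclideanSpace ℝ (Fin d), g x ≤ 0 → phiAux d g σ μ pσ x = pσ / Fsig g σ μ x := by
    intro x hx
    unfold phiAux
    rw [if_pos hx]
    have h2 : gaussD d x ≠ 0 := (hρpos x).ne'
    rw [div_div_eq_mul_div, mul_comm (gaussD d x) pσ, mul_div_mul_right _ _ h2]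
  have hφoff : ∀ x : EuclideanSpace ℝ (Fin d), ¬ g x ≤ 0 → phiAux d g σ μ pσ x = 0 := by
    intro x hx
    unfold phiAux
    rw [if_neg hx]
  have hφnn : ∀ x, 0 ≤ phiAux d g σ μ pσ x := by
    intro x
    by_cases hx : g x ≤ 0
    · rw [hφA x hx]
      exact div_nonneg hpσpos.le (hFpos x).le
    · rw [hφoff x hx]
  have hφle2 : ∀ x, phiAux d g σ μ pσ x ≤ 2 := by
    intro x
    by_cases hx : g x ≤ 0
    · rw [hφA x hx]
      have hinv : (Fsig g σ μ x)⁻¹ ≤ 2 := by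
        have := hFhalf x hx
        calc (Fsig g σ μ x)⁻¹ ≤ ((2:ℝ)⁻¹)⁻¹ := inv_anti₀ (by norm_num) this
          _ = 2 := by norm_num
      rw [div_eq_mul_inv]
      nlinarith [inv_nonneg.mpr (hFpos x).le, hpσpos]
    · rw [hφoff x hx]
      norm_num
  have hφmeas : Measurable (phiAux d g σ μ pσ) := by
    unfold phiAux
    exact Measurable.ite hA (hρmeas.div ((hFmeas.mul hρmeas).div_const pσ)) measurable_const
  have hdensmeas : Measurable (fun x : EuclideanSpace ℝ (Fin d) =>
      Fsig g σ μ x * gaussD d x / pσ) := by fun_prop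
  have hdensnn : ∀ x : EuclideanSpace ℝ (Fin d), 0 ≤ Fsig g σ μ x * gaussD d x / pσ :=
    fun x => div_nonneg (mul_nonneg (hFpos x).le (hρpos x).le) hpσpos.le
  -- mean of φ(X i) is p
  have hmean : ∀ i, ∫ ω, phiAux d g σ μ pσ (X i ω) ∂P = p := by
    intro i
    rw [key_int (hXmeas i) hdensmeas hdensnn (hXlaw i) _ hφmeas hφnn]
    have hpt : ∀ x : EuclideanSpace ℝ (Fin d),
        ENNReal.ofReal (phiAux d g σ μ pσ x * (Fsig g σ μ x * gaussD d x / pσ))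
        = Set.indicator {y | g y ≤ 0} (fun x => ENNReal.ofReal (gaussD d x)) x := by
      intro x
      by_cases hx : g x ≤ 0
      · rw [Set.indicator_of_mem (show x ∈ {y | g y ≤ 0} from hx), hφA x hx]
        congr 1
        have h1 : Fsig g σ μ x ≠ 0 := (hFpos x).ne'
        have h3 : pσ ≠ 0 := hpσpos.ne'
        field_simp
      · rw [Set.indicator_of_notMem (show x ∉ {y | g y ≤ 0} from hx), hφoff x hx]
        simp
    rw [lintegral_congr hpt, lintegral_indicator hA, hAρ, ENNReal.toReal_ofReal hppos.le]
  -- integrability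
  have hψmeas : ∀ i, Measurable (fun ω => phiAux d g σ μ pσ (X i ω) - p) :=
    fun i => (hφmeas.comp (hXmeas i)).sub measurable_const
  have hψbdd : ∀ i ω, |phiAux d g σ μ pσ (X i ω) - p| ≤ 3 := by
    intro i ω
    rw [abs_le]
    constructor
    · nlinarith [hφnn (X i ω)]
    · nlinarith [hφle2 (X i ω)]
  have hψint : ∀ i, Integrable (fun ω => phiAux d g σ μ pσ (X i ω) - p) P := by
    intro i
    apply Integrable.mono' (integrable_const (3:ℝ)) (hψmeas i).aestronglyMeasurable
    exact ae_of_all _ fun ω => by rw [Real.norm_eq_abs]; exact hψbdd i ω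
  have hψψint : ∀ i j, Integrable (fun ω => (phiAux d g σ μ pσ (X i ω) - p)
      * (phiAux d g σ μ pσ (X j ω) - p)) P := by
    intro i j
    apply Integrable.mono' (integrable_const (9:ℝ))
      ((hψmeas i).mul (hψmeas j)).aestronglyMeasurable
    apply ae_of_all _ fun ω => ?_
    rw [Real.norm_eq_abs, Pi.mul_apply, abs_mul]
    nlinarith [hψbdd i ω, hψbdd j ω, abs_nonneg (phiAux d g σ μ pσ (X i ω) - p),
      abs_nonneg (phiAux d g σ μ pσ (X j ω) - p)]
  have hψzero : ∀ i, ∫ ω, (phiAux d g σ μ pσ (X i ω) - p) ∂P = 0 := by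
    intro i
    have hint : Integrable (fun ω => phiAux d g σ μ pσ (X i ω)) P := by
      apply Integrable.mono' (integrable_const (2:ℝ))
        ((hφmeas.comp (hXmeas i))).aestronglyMeasurable
      exact ae_of_all _ fun ω => by
        simp only [Function.comp_apply, Real.norm_eq_abs]
        rw [abs_of_nonneg (hφnn _)]; exact hφle2 _
    rw [integral_sub hint (integrable_const p), hmean i, integral_const]
    simp
  have hcross : ∀ i j, i ≠ j → ∫ ω, (phiAux d g σ μ pσ (X i ω) - p)
      * (phiAux d g σ μ pσ (X j ω) - p) ∂P = 0 := by
    intro i j hij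
    have hind : IndepFun (fun ω => phiAux d g σ μ pσ (X i ω) - p)
        (fun ω => phiAux d g σ μ pσ (X j ω) - p) P := by
      have := (hindep.indepFun hij).comp
        (φ := fun x => phiAux d g σ μ pσ x - p) (ψ := fun x => phiAux d g σ μ pσ x - p)
        (hφmeas.sub measurable_const) (hφmeas.sub measurable_const)
      exact this
    have := hind.integral_mul_eq_mul_integral (hψint i).aestronglyMeasurable (hψint j).aestronglyMeasurable
    calc ∫ ω, (phiAux d g σ μ pσ (X i ω) - p) * (phiAux d g σ μ pσ (X j ω) - p) ∂P
        = (∫ ω, (phiAux d g σ μ pσ (X i ω) - p) ∂P)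
          * ∫ ω, (phiAux d g σ μ pσ (X j ω) - p) ∂P := this
      _ = 0 := by rw [hψzero i, hψzero j, mul_zero]
  -- second moment bound for each sample
  have hVle : ∀ i, ∫ ω, (phiAux d g σ μ pσ (X i ω) - p) ^ 2 ∂P ≤ 36 * (e + q) := by
    intro i
    have hkey := key_int (hXmeas i) hdensmeas hdensnn (hXlaw i)
      (fun x => (phiAux d g σ μ pσ x - p) ^ 2)
      ((hφmeas.sub measurable_const).pow_const 2) (fun x => sq_nonneg _)
    rw [hkey]
    have hAbd : (∫⁻ x in {y | g y ≤ 0},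
        ENNReal.ofReal ((phiAux d g σ μ pσ x - p) ^ 2 * (Fsig g σ μ x * gaussD d x / pσ)))
        ≤ ENNReal.ofReal (2 * (pσ - p) ^ 2) + ENNReal.ofReal (2 * e ^ 2) := by
      have hc1nn : (0:ℝ) ≤ 2 * (pσ - p) ^ 2 / pσ := by positivity
      have hptA : ∀ x ∈ {y : EuclideanSpace ℝ (Fin d) | g y ≤ 0},
          ENNReal.ofReal ((phiAux d g σ μ pσ x - p) ^ 2 * (Fsig g σ μ x * gaussD d x / pσ))
          ≤ ENNReal.ofReal ((2 * (pσ - p) ^ 2 / pσ) * (Fsig g σ μ x * gaussD d x))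
            + ENNReal.ofReal ((2 * e ^ 2) * gaussD d x) := by
        intro x hx
        have hx' : g x ≤ 0 := hx
        have hE : (0:ℝ) < Real.exp ((-μ + g x) / σ) := Real.exp_pos _
        have hEe := hEA x hx'
        have hρ := hρpos x
        have hFx := hFpos x
        have hF1 := hFle x
        have hpdiv : pσ / Fsig g σ μ x = pσ * (1 + Real.exp ((-μ + g x) / σ)) := by
          rw [hFinv x, div_eq_mul_inv, inv_inv]
        have hreal : (phiAux d g σ μ pσ x - p) ^ 2 * (Fsig g σ μ x * gaussD d x / pσ)
            ≤ (2 * (pσ - p) ^ 2 / pσ) * (Fsig g σ μ x * gaussD d x)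
              + (2 * e ^ 2) * gaussD d x := by
          rw [hφA x hx', hpdiv]
          have key1 : (pσ * (1 + Real.exp ((-μ + g x) / σ)) - p) ^ 2
              ≤ 2 * (pσ - p) ^ 2 + 2 * pσ ^ 2 * (Real.exp ((-μ + g x) / σ)) ^ 2 := by
            nlinarith [sq_nonneg ((pσ - p) - pσ * Real.exp ((-μ + g x) / σ))]
          have hE2 : (Real.exp ((-μ + g x) / σ)) ^ 2 ≤ e ^ 2 := by nlinarith
          have hc : pσ ^ 2 * (Real.exp ((-μ + g x) / σ)) ^ 2 * Fsig g σ μ x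
              ≤ pσ * e ^ 2 := by
            nlinarith [mul_nonneg (sub_nonneg.mpr hF1)
                (mul_nonneg (sq_nonneg pσ) (sq_nonneg (Real.exp ((-μ + g x) / σ)))),
              mul_nonneg (sub_nonneg.mpr hpσle1)
                (mul_nonneg hpσpos.le (sq_nonneg (Real.exp ((-μ + g x) / σ)))),
              mul_nonneg hpσpos.le (sub_nonneg.mpr hE2)]
          have key2 : pσ ^ 2 * (Real.exp ((-μ + g x) / σ)) ^ 2
                * (Fsig g σ μ x * gaussD d x) ≤ e ^ 2 * (gaussD d x * pσ) := by
            nlinarith [mul_le_mul_of_nonneg_right hc hρ.le]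
          have G : (pσ * (1 + Real.exp ((-μ + g x) / σ)) - p) ^ 2
                * (Fsig g σ μ x * gaussD d x)
              ≤ (2 * (pσ - p) ^ 2) * (Fsig g σ μ x * gaussD d x)
                + 2 * (e ^ 2 * (gaussD d x * pσ)) := by
            have h1 := mul_le_mul_of_nonneg_right key1 (mul_pos hFx hρ).le
            nlinarith [key2]
          calc (pσ * (1 + Real.exp ((-μ + g x) / σ)) - p) ^ 2
                * (Fsig g σ μ x * gaussD d x / pσ)
              = ((pσ * (1 + Real.exp ((-μ + g x) / σ)) - p) ^ 2
                * (Fsig g σ μ x * gaussD d x)) / pσ := by ring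
            _ ≤ ((2 * (pσ - p) ^ 2) * (Fsig g σ μ x * gaussD d x)
                + 2 * (e ^ 2 * (gaussD d x * pσ))) / pσ := by
                exact (div_le_div_iff_of_pos_right hpσpos).mpr G
            _ = (2 * (pσ - p) ^ 2 / pσ) * (Fsig g σ μ x * gaussD d x)
                + (2 * e ^ 2) * gaussD d x := by
                field_simp
        calc ENNReal.ofReal ((phiAux d g σ μ pσ x - p) ^ 2 * (Fsig g σ μ x * gaussD d x / pσ))
            ≤ ENNReal.ofReal ((2 * (pσ - p) ^ 2 / pσ) * (Fsig g σ μ x * gaussD d x)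
              + (2 * e ^ 2) * gaussD d x) := ENNReal.ofReal_le_ofReal hreal
          _ ≤ _ := ENNReal.ofReal_add_le
      calc ∫⁻ x in {y | g y ≤ 0},
            ENNReal.ofReal ((phiAux d g σ μ pσ x - p) ^ 2 * (Fsig g σ μ x * gaussD d x / pσ))
          ≤ ∫⁻ x in {y | g y ≤ 0},
              (ENNReal.ofReal ((2 * (pσ - p) ^ 2 / pσ) * (Fsig g σ μ x * gaussD d x))
              + ENNReal.ofReal ((2 * e ^ 2) * gaussD d x)) :=
            setLIntegral_mono (by fun_prop) hptA
        _ = (∫⁻ x in {y | g y ≤ 0},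
              ENNReal.ofReal ((2 * (pσ - p) ^ 2 / pσ) * (Fsig g σ μ x * gaussD d x)))
            + ∫⁻ x in {y | g y ≤ 0}, ENNReal.ofReal ((2 * e ^ 2) * gaussD d x) :=
            lintegral_add_left (by fun_prop) _
        _ ≤ ENNReal.ofReal (2 * (pσ - p) ^ 2) + ENNReal.ofReal (2 * e ^ 2) := by
            apply add_le_add
            · simp_rw [ENNReal.ofReal_mul hc1nn]
              rw [lintegral_const_mul' _ _ ENNReal.ofReal_ne_top]
              calc ENNReal.ofReal (2 * (pσ - p) ^ 2 / pσ)
                    * ∫⁻ x in {y | g y ≤ 0}, ENNReal.ofReal (Fsig g σ μ x * gaussD d x)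
                  ≤ ENNReal.ofReal (2 * (pσ - p) ^ 2 / pσ)
                    * ∫⁻ x, ENNReal.ofReal (Fsig g σ μ x * gaussD d x) :=
                    mul_le_mul_right (setLIntegral_le_lintegral _ _) _
                _ = ENNReal.ofReal (2 * (pσ - p) ^ 2) := by
                    rw [hFρ, ← ENNReal.ofReal_mul hc1nn, div_mul_cancel₀ _ hpσpos.ne']
            · simp_rw [ENNReal.ofReal_mul (by positivity : (0:ℝ) ≤ 2 * e ^ 2)]
              rw [lintegral_const_mul' _ _ ENNReal.ofReal_ne_top]
              calc ENNReal.ofReal (2 * e ^ 2)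
                    * ∫⁻ x in {y | g y ≤ 0}, ENNReal.ofReal (gaussD d x)
                  ≤ ENNReal.ofReal (2 * e ^ 2) * ∫⁻ x, ENNReal.ofReal (gaussD d x) :=
                    mul_le_mul_right (setLIntegral_le_lintegral _ _) _
                _ = ENNReal.ofReal (2 * e ^ 2) := by rw [htot, mul_one]
    have hp2pσ : p ^ 2 / pσ ≤ 2 := by
      rw [div_le_iff₀ hpσpos]
      nlinarith [hhalf, hple1, hppos]
    have hCbd : ∫⁻ x in {y | g y ≤ 0}ᶜ,
        ENNReal.ofReal ((phiAux d g σ μ pσ x - p) ^ 2 * (Fsig g σ μ x * gaussD d x / pσ))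
        ≤ ENNReal.ofReal (2 * e + 2 * q) := by
      have hcongr : ∫⁻ x in {y | g y ≤ 0}ᶜ,
          ENNReal.ofReal ((phiAux d g σ μ pσ x - p) ^ 2 * (Fsig g σ μ x * gaussD d x / pσ))
          = ∫⁻ x in {y | g y ≤ 0}ᶜ, ENNReal.ofReal (p ^ 2 / pσ)
              * ENNReal.ofReal (Fsig g σ μ x * gaussD d x) := by
        apply setLIntegral_congr_fun hA.compl
        intro x hx
        have hx' : ¬ g x ≤ 0 := hx
        beta_reduce
        rw [hφoff x hx', ← ENNReal.ofReal_mul (by positivity)]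
        congr 1
        field_simp
        ring
      rw [hcongr, lintegral_const_mul' _ _ ENNReal.ofReal_ne_top]
      calc ENNReal.ofReal (p ^ 2 / pσ)
            * ∫⁻ x in {y | g y ≤ 0}ᶜ, ENNReal.ofReal (Fsig g σ μ x * gaussD d x)
          ≤ ENNReal.ofReal 2 * (ENNReal.ofReal e + ENNReal.ofReal q) := by
            apply mul_le_mul' (ENNReal.ofReal_le_ofReal hp2pσ)
            rw [← hQq]
            exact hJ
        _ = ENNReal.ofReal (2 * e + 2 * q) := by
            rw [← ENNReal.ofReal_add hepos.le hqnn, ← ENNReal.ofReal_mul (by norm_num)]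
            congr 1
            ring
    have htotal : ∫⁻ x,
        ENNReal.ofReal ((phiAux d g σ μ pσ x - p) ^ 2 * (Fsig g σ μ x * gaussD d x / pσ))
        ≤ ENNReal.ofReal (36 * (e + q)) := by
      rw [← lintegral_add_compl (μ := volume) (fun x =>
        ENNReal.ofReal ((phiAux d g σ μ pσ x - p) ^ 2 * (Fsig g σ μ x * gaussD d x / pσ))) hA]
      calc _ ≤ (ENNReal.ofReal (2 * (pσ - p) ^ 2) + ENNReal.ofReal (2 * e ^ 2))
            + ENNReal.ofReal (2 * e + 2 * q) := add_le_add hAbd hCbd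
        _ = ENNReal.ofReal (2 * (pσ - p) ^ 2 + 2 * e ^ 2 + (2 * e + 2 * q)) := by
            rw [← ENNReal.ofReal_add (by positivity) (by positivity),
              ← ENNReal.ofReal_add (by positivity) (by nlinarith [hepos, hqnn])]
        _ ≤ ENNReal.ofReal (36 * (e + q)) := by
            apply ENNReal.ofReal_le_ofReal
            have h1 : pσ - p ≤ e + q := by linarith [hcmp1]
            have h2 : -(e + q) ≤ pσ - p := by linarith [hcmp2, hqnn]
            have h3 : (pσ - p) ^ 2 ≤ (e + q) ^ 2 := sq_le_sq' h2 h1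
            have h4 : (e + q) ^ 2 ≤ 2 * (e + q) := by nlinarith
            have h5 : e ^ 2 ≤ e := by nlinarith
            linarith
    exact ENNReal.toReal_le_of_le_ofReal (by nlinarith) htotal
  -- expansion of the square of the sum
  have hsum : ∫ ω, (∑ i, (phiAux d g σ μ pσ (X i ω) - p)) ^ 2 ∂P
      ≤ N * (36 * (e + q)) := by
    have hexp : ∀ ω : Ω, (∑ i, (phiAux d g σ μ pσ (X i ω) - p)) ^ 2
        = ∑ i, ∑ j, (phiAux d g σ μ pσ (X i ω) - p) * (phiAux d g σ μ pσ (X j ω) - p) := by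
      intro ω
      rw [sq, Finset.sum_mul_sum]
    calc ∫ ω, (∑ i, (phiAux d g σ μ pσ (X i ω) - p)) ^ 2 ∂P
        = ∑ i, ∑ j, ∫ ω, (phiAux d g σ μ pσ (X i ω) - p)
            * (phiAux d g σ μ pσ (X j ω) - p) ∂P := by
          simp_rw [hexp]
          rw [integral_finset_sum _ (fun i _ => integrable_finset_sum _ (fun j _ => hψψint i j))]
          exact Finset.sum_congr rfl fun i _ =>
            integral_finset_sum _ (fun j _ => hψψint i j)
      _ = ∑ i, ∫ ω, (phiAux d g σ μ pσ (X i ω) - p) ^ 2 ∂P := by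
          apply Finset.sum_congr rfl
          intro i _
          rw [Finset.sum_eq_single i (fun j _ hj => hcross i j (Ne.symm hj)) (by simp)]
          congr 1
          ext ω
          ring
      _ ≤ ∑ _i : Fin N, (36 * (e + q)) := Finset.sum_le_sum (fun i _ => hVle i)
      _ = N * (36 * (e + q)) := by
          rw [Finset.sum_const, Finset.card_univ, Fintype.card_fin, nsmul_eq_mul]
  have hNne : (N:ℝ) ≠ 0 := Nat.cast_ne_zero.mpr hN.ne'
  have hNpos : (0:ℝ) < N := Nat.cast_pos.mpr hN
  have hmain : ∫ ω, ((N : ℝ)⁻¹ * ∑ i, phiAux d g σ μ pσ (X i ω) - p) ^ 2 ∂P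
      ≤ 36 * (e + q) / N := by
    have hid : ∀ ω : Ω, ((N : ℝ)⁻¹ * ∑ i, phiAux d g σ μ pσ (X i ω) - p) ^ 2
        = ((N:ℝ)⁻¹) ^ 2 * (∑ i, (phiAux d g σ μ pσ (X i ω) - p)) ^ 2 := by
      intro ω
      have hsub : ∑ i, (phiAux d g σ μ pσ (X i ω) - p)
          = (∑ i, phiAux d g σ μ pσ (X i ω)) - N * p := by
        rw [Finset.sum_sub_distrib, Finset.sum_const, Finset.card_univ, Fintype.card_fin,
          nsmul_eq_mul]
      rw [hsub]
      field_simp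
    calc ∫ ω, ((N : ℝ)⁻¹ * ∑ i, phiAux d g σ μ pσ (X i ω) - p) ^ 2 ∂P
        = ((N:ℝ)⁻¹) ^ 2 * ∫ ω, (∑ i, (phiAux d g σ μ pσ (X i ω) - p)) ^ 2 ∂P := by
          simp_rw [hid]
          exact integral_const_mul _ _
      _ ≤ ((N:ℝ)⁻¹) ^ 2 * (N * (36 * (e + q))) := by
          apply mul_le_mul_of_nonneg_left hsum (by positivity)
      _ = 36 * (e + q) / N := by
          field_simp
  -- the coupling term is nonnegative
  set T := ∫ ω, (if g (X ⟨0, hN⟩ ω) ≤ 0 then (g (X ⟨0, hN⟩ ω) - g (Y ω)) ^ 2 else 0) ∂P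
    with hTdef
  have hTnn : 0 ≤ T := by
    rw [hTdef]
    apply integral_nonneg
    intro ω
    by_cases hx : g (X ⟨0, hN⟩ ω) ≤ 0
    · simp only [Pi.zero_apply, if_pos hx]
      positivity
    · simp only [Pi.zero_apply, if_neg hx]
      exact le_refl 0
  set R := e + q + Real.exp (-2 * μ / σ) / σ ^ 2 * T with hRdef
  have heqR : e + q ≤ R := by
    rw [hRdef]
    have h0 : 0 ≤ Real.exp (-2 * μ / σ) / σ ^ 2 * T := by positivity
    linarith
  have hRnn : (0:ℝ) ≤ R := by nlinarith [hepos, hqnn]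
  -- final assembly
  have hsq1 : Real.sqrt (∫ ω, ((N : ℝ)⁻¹ * ∑ i, phiAux d g σ μ pσ (X i ω) - p) ^ 2 ∂P)
      ≤ Real.sqrt (36 * R / N) := by
    apply Real.sqrt_le_sqrt
    calc ∫ ω, ((N : ℝ)⁻¹ * ∑ i, phiAux d g σ μ pσ (X i ω) - p) ^ 2 ∂P
        ≤ 36 * (e + q) / N := hmain
      _ ≤ 36 * R / N := by
          apply (div_le_div_iff_of_pos_right hNpos).mpr
          linarith
  have hsq2 : Real.sqrt (36 * R / N) = 6 * Real.sqrt R / Real.sqrt N := by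
    rw [Real.sqrt_div (by positivity) _, Real.sqrt_mul (by norm_num) R,
      show Real.sqrt 36 = 6 from by
        rw [show (36:ℝ) = 6 ^ 2 by norm_num, Real.sqrt_sq (by norm_num)]]
  have hsN : 0 < Real.sqrt N := Real.sqrt_pos.mpr hNpos
  calc p⁻¹ * Real.sqrt (∫ ω, ((N : ℝ)⁻¹ * ∑ i, phiAux d g σ μ pσ (X i ω) - p) ^ 2 ∂P)
      ≤ p⁻¹ * (6 * Real.sqrt R / Real.sqrt N) := by
        rw [← hsq2]
        exact mul_le_mul_of_nonneg_left hsq1 (by positivity)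
    _ = 6 / (Real.sqrt N * p) * Real.sqrt R := by
        field_simp
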